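/- There exist holomorphic functions σ_k (k ∈ ℤ) on ℂ, namely σ_k(z) = e^{2πiz}/(z−k), such that the σ_k have no common zero (they generate the trivial line bundle everywhere), yet the O(ℂ)-module generated by the σ_k is a proper subset of O(ℂ): every function in this module vanishes at all but finitely many integers, while e.g. the constant function 1 does not. -/

import Mathlib

open Complex

theorem aux_exp_int (k : ℤ) : Complex.exp (2 * Real.pi * I * k) = 1 := by
  rw [show (2 * Real.pi * I * k : ℂ) = k * (2 * Real.pi * I) by ring]
  exact Complex.exp_int_mul_two_pi_mul_I k

theorem aux_exp_ne (z : ℂ) (hz : ∀ k : ℤ, z ≠ (k : ℂ)) :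
    Complex.exp (2 * Real.pi * I * z) ≠ 1 := by
  intro h
  rw [Complex.exp_eq_one_iff] at h
  obtain ⟨n, hn⟩ := h
  apply hz n
  have hne : (2 * Real.pi * I : ℂ) ≠ 0 :=
    mul_ne_zero (mul_ne_zero two_ne_zero (Complex.ofReal_ne_zero.mpr Real.pi_ne_zero)) I_ne_zero
  have : (2 * Real.pi * I : ℂ) * z = (2 * Real.pi * I : ℂ) * n := by linear_combination hn
  exact mul_left_cancel₀ hne this

theorem stmt17 :
    ∃ σ : ℤ → ℂ → ℂ,
      (∀ k, σ k = fun z =>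
        if z = (k : ℂ) then 2 * Real.pi * I
        else (Complex.exp (2 * Real.pi * I * z) - 1) / (z - (k : ℂ))) ∧
      (∀ k, Differentiable ℂ (σ k)) ∧
      (∀ z : ℂ, ∃ k, σ k z ≠ 0) ∧
      (∀ f ∈ Submodule.span (ℂ → ℂ) (Set.range σ),
        {m : ℤ | f (m : ℂ) ≠ 0}.Finite) ∧
      (1 : ℂ → ℂ) ∉ Submodule.span (ℂ → ℂ) (Set.range σ) := by
  set g : ℂ → ℂ := fun z => Complex.exp (2 * Real.pi * I * z) - 1 with hg
  have hgdiff : Differentiable ℂ g := by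
    exact (Complex.differentiable_exp.comp (differentiable_id.const_mul _)).sub_const 1
  have hgk : ∀ k : ℤ, g (k : ℂ) = 0 := fun k => by simp [hg, aux_exp_int k]
  have hderiv : ∀ k : ℤ, deriv g (k : ℂ) = 2 * Real.pi * I := by
    intro k
    have h1 : HasDerivAt g (Complex.exp (2 * Real.pi * I * k) * (2 * Real.pi * I)) k := by
      simpa [hg] using (((hasDerivAt_id (k : ℂ)).const_mul (2 * Real.pi * I)).cexp.sub_const 1)
    rw [h1.deriv, aux_exp_int k, one_mul]
  set σ : ℤ → ℂ → ℂ := fun k z =>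
    if z = (k : ℂ) then 2 * Real.pi * I
    else (Complex.exp (2 * Real.pi * I * z) - 1) / (z - (k : ℂ)) with hσ
  have hdslope : ∀ k : ℤ, σ k = dslope g (k : ℂ) := by
    intro k
    funext z
    by_cases h : z = (k : ℂ)
    · subst h
      simp [hσ, dslope_same, hderiv k]
    · rw [dslope_of_ne g h]
      simp only [hσ, if_neg h]
      rw [slope_def_field, hgk k, sub_zero]
  have hfin : ∀ f ∈ Submodule.span (ℂ → ℂ) (Set.range σ),
      {m : ℤ | f (m : ℂ) ≠ 0}.Finite := by
    intro f hf
    induction hf using Submodule.span_induction with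
    | mem x hx =>
      obtain ⟨k, rfl⟩ := hx
      refine Set.Finite.subset (Set.finite_singleton k) ?_
      intro m hm
      simp only [Set.mem_setOf_eq, hσ] at hm
      by_contra hmk
      apply hm
      have : (m : ℂ) ≠ (k : ℂ) := by exact_mod_cast fun h => hmk (by exact_mod_cast h)
      rw [if_neg this]
      simp [aux_exp_int m]
    | zero => simp
    | add x y _ _ hx hy =>
      refine (hx.union hy).subset ?_
      intro m hm
      simp only [Set.mem_setOf_eq, Pi.add_apply] at hm ⊢
      by_contra h
      simp only [Set.mem_union, Set.mem_setOf_eq, not_or, not_not] at h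
      exact hm (by rw [h.1, h.2, add_zero])
    | smul c x _ hx =>
      refine hx.subset ?_
      intro m hm
      simp only [Set.mem_setOf_eq, smul_eq_mul, Pi.mul_apply] at hm ⊢
      exact fun h => hm (by rw [h, mul_zero])
  refine ⟨σ, fun k => rfl, ?_, ?_, hfin, ?_⟩
  · intro k
    rw [hdslope k, ← differentiableOn_univ]
    rw [Complex.differentiableOn_dslope (by simp)]
    exact hgdiff.differentiableOn
  · intro z
    by_cases h : ∃ k : ℤ, z = (k : ℂ)
    · obtain ⟨k, rfl⟩ := h
      refine ⟨k, ?_⟩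
      simp [hσ, Real.pi_ne_zero, Complex.I_ne_zero]
    · push_neg at h
      refine ⟨0, ?_⟩
      simp only [hσ, Int.cast_zero, if_neg (h 0)]
      exact div_ne_zero (sub_ne_zero.mpr (aux_exp_ne z h)) (sub_ne_zero.mpr (by simpa using h 0))
  · intro h1
    have := hfin 1 h1
    have h2 : {m : ℤ | (1 : ℂ → ℂ) (m : ℂ) ≠ 0} = Set.univ := by
      ext m; simp [Pi.one_apply]
    rw [h2] at this
    exact Set.infinite_univ this
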